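/- Let A be a finite-dimensional k-algebra with d = dim_k A and m ≥ 0 an integer. Let P• be a minimal complex of finitely generated projective A-modules concentrated in degrees 0,…,m, and suppose dim_k H^i(P•) ≤ c for all i. Then for each i in [0,m], dim_k P^i ≤ c·(d + d² + ⋯ + d^{m−i+1}). -/

import Mathlib

open CategoryTheory

/-- The radical of a module `M` over `A`: the submodule `rad(A)·M`. -/
def modRad (A M : Type*) [Ring A] [AddCommGroup M] [Module A M] : Submodule A M :=
  Submodule.span A {y | ∃ a ∈ Ideal.jacobson (⊥ : Ideal A), ∃ x : M, a • x = y}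

/-- The dimension of an `A`-module over the base field `k`. -/
noncomputable def kdim (k : Type*) [Field k] (A : Type*) [Ring A] [Algebra k A]
    (M : Type*) [AddCommGroup M] [Module A M] : ℕ :=
  Module.finrank k (RestrictScalars k A M)

@[reducible] def rsACM {k A M : Type*} [AddCommGroup M] : AddCommMonoid (RestrictScalars k A M) :=
  AddCommGroup.toAddCommMonoid

@[reducible] def rsModuleG {k A M : Type*} [Field k] [Ring A] [Algebra k A] [AddCommGroup M]
    [Module A M] : @Module k (RestrictScalars k A M) _ rsACM :=
  RestrictScalars.module k A M

section RSFix
attribute [local instance] rsACM rsModuleG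

section KRes
variable (k : Type*) [Field k] (A : Type*) [Ring A] [Algebra k A]
variable {M N : Type*} [AddCommGroup M] [Module A M] [AddCommGroup N] [Module A N]

lemma rs_smul_def (c : k) (x : RestrictScalars k A M) :
    c • x = (show M from (algebraMap k A c) • (show M from x)) := rfl

/-- An `A`-linear map induces a `k`-linear map on restricted scalars. -/
def kres (f : M →ₗ[A] N) : RestrictScalars k A M →ₗ[k] RestrictScalars k A N where
  toFun x := (f (show M from x) : N)
  map_add' x y := f.map_add _ _
  map_smul' c x := f.map_smul (algebraMap k A c) _

@[simp] lemma kres_apply (f : M →ₗ[A] N) (x : RestrictScalars k A M) :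
    kres k A f x = (f (show M from x) : N) := rfl

/-- An `A`-linear equiv induces a `k`-linear equiv on restricted scalars. -/
def kresEquiv (e : M ≃ₗ[A] N) : RestrictScalars k A M ≃ₗ[k] RestrictScalars k A N :=
  LinearEquiv.ofLinear (kres k A e.toLinearMap) (kres k A e.symm.toLinearMap)
    (by ext x; exact e.apply_symm_apply x) (by ext x; exact e.symm_apply_apply x)

lemma kdim_eq_of_equiv (e : M ≃ₗ[A] N) : kdim k A M = kdim k A N :=
  (kresEquiv k A e).finrank_eq
end KRes
section KSub
variable (k : Type*) [Field k] (A : Type*) [Ring A] [Algebra k A]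
variable {M N : Type*} [AddCommGroup M] [Module A M] [AddCommGroup N] [Module A N]

/-- The `k`-submodule of `RestrictScalars k A M` corresponding to an `A`-submodule. -/
def krSub (p : Submodule A M) : Submodule k (RestrictScalars k A M) where
  carrier := p.carrier
  add_mem' := p.add_mem
  zero_mem' := p.zero_mem
  smul_mem' c x hx := p.smul_mem (algebraMap k A c) hx

@[simp] lemma mem_krSub (p : Submodule A M) (x : RestrictScalars k A M) :
    x ∈ krSub k A p ↔ (show M from x) ∈ p := Iff.rfl

/-- `k`-linear equivalence between a submodule and its restricted version. -/
def krSubEquiv (p : Submodule A M) : RestrictScalars k A p ≃ₗ[k] (krSub k A p) where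
  toFun x := ⟨(show p from x).1, (show p from x).2⟩
  invFun x := show p from ⟨x.1, x.2⟩
  map_add' x y := rfl
  map_smul' c x := rfl
  left_inv x := rfl
  right_inv x := rfl

lemma kdim_sub_eq (p : Submodule A M) : kdim k A p = Module.finrank k (krSub k A p) :=
  (krSubEquiv k A p).finrank_eq

/-- `k`-linear equivalence between quotients. -/
noncomputable def krQuotEquiv (p : Submodule A M) :
    (RestrictScalars k A M ⧸ krSub k A p) ≃ₗ[k] RestrictScalars k A (M ⧸ p) := by
  refine LinearEquiv.ofBijective ((krSub k A p).liftQ (kres k A p.mkQ) ?_) ⟨?_, ?_⟩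
  · intro x hx
    simp only [LinearMap.mem_ker, kres_apply, Submodule.mkQ_apply]
    exact (Submodule.Quotient.mk_eq_zero p).2 hx
  · rw [← LinearMap.ker_eq_bot, LinearMap.ker_eq_bot']
    intro x hx
    obtain ⟨y, rfl⟩ := (krSub k A p).mkQ_surjective x
    rw [Submodule.mkQ_apply, Submodule.Quotient.mk_eq_zero]
    simp only [Submodule.mkQ_apply, Submodule.liftQ_apply, kres_apply] at hx
    exact (Submodule.Quotient.mk_eq_zero p).1 hx
  · intro x
    obtain ⟨y, rfl⟩ := p.mkQ_surjective (show M ⧸ p from x)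
    exact ⟨Submodule.Quotient.mk y, rfl⟩

lemma kdim_quot_eq (p : Submodule A M) :
    kdim k A (M ⧸ p) = Module.finrank k (RestrictScalars k A M ⧸ krSub k A p) :=
  (krQuotEquiv k A p).symm.finrank_eq
end KSub
section KFin
variable (k : Type*) [Field k] (A : Type*) [Ring A] [Algebra k A] [FiniteDimensional k A]
variable {M N : Type*} [AddCommGroup M] [Module A M] [AddCommGroup N] [Module A N]

/-- If `M` carries a compatible `k`-structure, restricted scalars is equivalent to it. -/
def rsEquiv [Module k M] [IsScalarTower k A M] : RestrictScalars k A M ≃ₗ[k] M where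
  toFun x := show M from x
  invFun x := x
  map_add' _ _ := rfl
  map_smul' c x := algebraMap_smul A c (show M from x)
  left_inv _ := rfl
  right_inv _ := rfl

lemma kfin [Module.Finite A M] : FiniteDimensional k (RestrictScalars k A M) := by
  obtain ⟨n, Φ, hΦ⟩ := Module.Finite.exists_fin' A M
  haveI : FiniteDimensional k (RestrictScalars k A (Fin n → A)) :=
    Module.Finite.equiv (rsEquiv k A (M := Fin n → A)).symm
  exact Module.Finite.of_surjective (kres k A Φ) hΦ

lemma kdim_le_of_surjective (f : M →ₗ[A] N) (hf : Function.Surjective f)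
    [Module.Finite A M] : kdim k A N ≤ kdim k A M := by
  haveI := kfin k A (M := M)
  have h1 : LinearMap.range (kres k A f) = ⊤ := LinearMap.range_eq_top.2 hf
  calc kdim k A N = Module.finrank k (LinearMap.range (kres k A f)) := by
        rw [h1]; exact (LinearEquiv.ofTop _ rfl).symm.finrank_eq
    _ ≤ kdim k A M := (kres k A f).finrank_range_le

lemma kdim_le_of_injective (f : M →ₗ[A] N) (hf : Function.Injective f)
    [Module.Finite A N] : kdim k A M ≤ kdim k A N := by
  haveI := kfin k A (M := N)
  have h1 := LinearMap.finrank_range_of_inj (f := kres k A f) hf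
  have h2 := Submodule.finrank_le (LinearMap.range (kres k A f))
  exact (le_of_eq h1.symm).trans h2

lemma kdim_add_quot (p : Submodule A M) [Module.Finite A M] :
    kdim k A (M ⧸ p) + kdim k A p = kdim k A M := by
  haveI := kfin k A (M := M)
  rw [kdim_sub_eq, kdim_quot_eq]
  exact Submodule.finrank_quotient_add_finrank (krSub k A p)

lemma kdim_rank_nullity (f : M →ₗ[A] N) [Module.Finite A M] :
    kdim k A (M ⧸ LinearMap.ker f) + kdim k A (LinearMap.ker f) = kdim k A M :=
  kdim_add_quot k A _

lemma kdim_subsingleton (h : Subsingleton M) : kdim k A M = 0 := by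
  haveI : Subsingleton (RestrictScalars k A M) := h
  exact Module.finrank_zero_of_subsingleton
end KFin
section Naka
variable {A : Type*} [Ring A]

lemma jac_unit {x : A} (hx : x ∈ Ideal.jacobson (⊥ : Ideal A)) : IsUnit (1 - x) := by
  obtain ⟨s, hs⟩ := Ideal.exists_mul_sub_mem_of_sub_one_mem_jacobson (1 - x)
    (by simpa using (Ideal.jacobson (⊥ : Ideal A)).neg_mem hx)
  rw [Ideal.mem_bot, sub_eq_zero] at hs
  have hs1 : s - 1 ∈ Ideal.jacobson (⊥ : Ideal A) := by
    have : s - 1 = s * x := by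
      have h' : s - s * x = 1 := by rw [← hs]; noncomm_ring
      exact sub_eq_iff_eq_add.2 ((eq_add_of_sub_eq h').trans (add_comm _ _))
    rw [this]
    simpa [smul_eq_mul] using (Ideal.jacobson (⊥ : Ideal A)).smul_mem s hx
  obtain ⟨t, ht⟩ := Ideal.exists_mul_sub_mem_of_sub_one_mem_jacobson s hs1
  rw [Ideal.mem_bot, sub_eq_zero] at ht
  have htx : t = 1 - x := by
    calc t = t * (s * (1 - x)) := by rw [hs, mul_one]
    _ = (t * s) * (1 - x) := by rw [mul_assoc]
    _ = 1 - x := by rw [ht, one_mul]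
  exact ⟨⟨1 - x, s, by rw [← htx]; exact ht, hs⟩, rfl⟩
end Naka
section Naka2
variable {A : Type*} [Ring A]

lemma unit_of_unit_swap {u v : A} (h : IsUnit (1 - v * u)) : IsUnit (1 - u * v) := by
  obtain ⟨⟨w, s, hws, hsw⟩, hw⟩ := h
  simp only [Units.val_mk] at hw
  subst hw
  have hws' : (1 - v * u) * s = 1 := hws
  have hsw' : s * (1 - v * u) = 1 := hsw
  refine ⟨⟨1 - u * v, 1 + u * (s * v), ?_, ?_⟩, rfl⟩
  · have h1 : u * (s * v) - u * v * (u * (s * v)) = u * v := by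
      calc u * (s * v) - u * v * (u * (s * v)) = u * (((1 - v * u) * s) * v) := by noncomm_ring
      _ = u * v := by rw [hws']; noncomm_ring
    calc (1 - u * v) * (1 + u * (s * v))
        = 1 + (u * (s * v) - u * v * (u * (s * v))) - u * v := by noncomm_ring
      _ = 1 := by rw [h1]; noncomm_ring
  · have h2 : u * (s * v) - u * (s * v) * (u * v) = u * v := by
      calc u * (s * v) - u * (s * v) * (u * v) = u * ((s * (1 - v * u)) * v) := by noncomm_ring
      _ = u * v := by rw [hsw']; noncomm_ring
    calc (1 + u * (s * v)) * (1 - u * v)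
        = 1 + (u * (s * v) - u * (s * v) * (u * v)) - u * v := by noncomm_ring
      _ = 1 := by rw [h2]; noncomm_ring

lemma jac_right {x : A} (hx : x ∈ Ideal.jacobson (⊥ : Ideal A)) (b : A) :
    x * b ∈ Ideal.jacobson (⊥ : Ideal A) := by
  rw [Ideal.jacobson, Ideal.mem_sInf]
  intro m hm
  obtain ⟨-, hmax⟩ := hm
  by_contra hxb
  have hsup : m ⊔ Ideal.span {x * b} = ⊤ := by
    refine hmax.1.2 _ (lt_of_le_of_ne le_sup_left ?_)
    intro h
    exact hxb (h ▸ Submodule.mem_sup_right (Ideal.subset_span rfl))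
  have h1 : (1 : A) ∈ m ⊔ Ideal.span {x * b} := hsup ▸ Submodule.mem_top
  obtain ⟨y, hy, z, hz, hyz⟩ := Submodule.mem_sup.1 h1
  obtain ⟨a, rfl⟩ := Submodule.mem_span_singleton.1 hz
  -- y = 1 - a * (x * b), and 1 - (a * x) * b is a unit
  have hax : a * x ∈ Ideal.jacobson (⊥ : Ideal A) := by
    simpa [smul_eq_mul] using (Ideal.jacobson (⊥ : Ideal A)).smul_mem a hx
  have hbax : b * (a * x) ∈ Ideal.jacobson (⊥ : Ideal A) := by
    simpa [smul_eq_mul] using (Ideal.jacobson (⊥ : Ideal A)).smul_mem b hax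
  have hu : IsUnit (1 - (a * x) * b) := unit_of_unit_swap (jac_unit hbax)
  have hy' : y = 1 - (a * x) * b := by
    have : a • (x * b) = (a * x) * b := by rw [smul_eq_mul, mul_assoc]
    rw [← hyz, this]; noncomm_ring
  have : m = ⊤ := m.eq_top_of_isUnit_mem (hy' ▸ hy) hu
  exact hmax.1.1 this
end Naka2
section Naka3
variable {A : Type*} [Ring A] {M : Type*} [AddCommGroup M] [Module A M]

lemma jac_smul_span_rep {s : Finset M} {x : M}
    (hx : x ∈ (Ideal.jacobson (⊥ : Ideal A)) • Submodule.span A (s : Set M)) :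
    ∃ f : M → A, (∀ y, f y ∈ Ideal.jacobson (⊥ : Ideal A)) ∧ x = ∑ y ∈ s, f y • y := by
  refine Submodule.smul_induction_on hx ?_ ?_
  · intro r hr n hn
    obtain ⟨g, -, hg⟩ := Submodule.mem_span_finset.1 hn
    refine ⟨fun y => r * g y, fun y => jac_right hr (g y), ?_⟩
    rw [← hg, Finset.smul_sum]
    exact Finset.sum_congr rfl fun y _ => by dsimp only; rw [smul_smul]
  · rintro x y ⟨f, hf, rfl⟩ ⟨g, hg, rfl⟩
    exact ⟨f + g, fun y => (Ideal.jacobson _).add_mem (hf y) (hg y),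
      by rw [← Finset.sum_add_distrib]; exact Finset.sum_congr rfl fun y _ => (add_smul _ _ _).symm⟩

lemma nakayama_aux : ∀ (n : ℕ) (s : Finset M),
    s.card ≤ n →
    Submodule.span A (s : Set M) ≤
      (Ideal.jacobson (⊥ : Ideal A)) • Submodule.span A (s : Set M) →
    Submodule.span A (s : Set M) = ⊥ := by
  intro n
  induction n with
  | zero =>
    intro s hcard _
    rw [Finset.card_eq_zero.1 (Nat.le_zero.1 hcard)]
    simp
  | succ n ih =>
    intro s hcard hle
    classical
    rcases s.eq_empty_or_nonempty with rfl | ⟨x, hx⟩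
    · simp
    · have hxs : x ∈ Submodule.span A (s : Set M) := Submodule.subset_span hx
      obtain ⟨f, hfJ, hfx⟩ := jac_smul_span_rep (hle hxs)
      set t := s.erase x with ht
      have h1 : ∑ y ∈ t, f y • y + f x • x = x := by
        rw [Finset.sum_erase_add s _ hx, ← hfx]
      have hsum : (1 - f x) • x = ∑ y ∈ t, f y • y := by
        rw [sub_smul, one_smul]
        exact (eq_sub_iff_add_eq.2 h1).symm
      obtain ⟨u, hu⟩ := jac_unit (hfJ x)
      have hxt : x ∈ Submodule.span A (t : Set M) := by
        have hxx : x = (↑u⁻¹ : A) • ((1 - f x) • x) := by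
          rw [smul_smul, ← hu, u.inv_mul, one_smul]
        rw [hxx, hsum, Finset.smul_sum]
        exact Submodule.sum_mem _ fun y hy =>
          Submodule.smul_mem _ _ (Submodule.smul_mem _ _ (Submodule.subset_span hy))
      have hspan : Submodule.span A (s : Set M) = Submodule.span A (t : Set M) := by
        refine le_antisymm (Submodule.span_le.2 fun y hy => ?_)
          (Submodule.span_mono (Finset.erase_subset _ _))
        rcases eq_or_ne y x with rfl | hne
        · exact hxt
        · exact Submodule.subset_span (Finset.mem_erase.2 ⟨hne, hy⟩)
      rw [hspan]
      refine ih t ?_ ?_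
      · have h2 : t.card < s.card := Finset.card_erase_lt_of_mem hx
        omega
      · rw [← hspan]; exact hle

/-- Noncommutative Nakayama: a f.g. submodule contained in `J • itself` is trivial. -/
lemma nakayama (N : Submodule A M) (hfg : N.FG)
    (hle : N ≤ (Ideal.jacobson (⊥ : Ideal A)) • N) : N = ⊥ := by
  obtain ⟨s, rfl⟩ := hfg
  exact nakayama_aux s.card s le_rfl hle
end Naka3
section Gen
variable {A : Type*} [Ring A] {M : Type*} [AddCommGroup M] [Module A M]

lemma modRad_eq : modRad A M = (Ideal.jacobson (⊥ : Ideal A)) • (⊤ : Submodule A M) := by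
  refine le_antisymm (Submodule.span_le.2 ?_) (Submodule.smul_le.2 fun r hr n _ => ?_)
  · rintro y ⟨a, ha, x, rfl⟩
    exact Submodule.smul_mem_smul ha Submodule.mem_top
  · exact Submodule.subset_span ⟨r, hr, n, rfl⟩

lemma sup_modRad_eq_top [Module.Finite A M] (S : Submodule A M)
    (h : S ⊔ modRad A M = ⊤) : S = ⊤ := by
  rw [modRad_eq] at h
  have hq : (⊤ : Submodule A (M ⧸ S)) ≤
      (Ideal.jacobson (⊥ : Ideal A)) • (⊤ : Submodule A (M ⧸ S)) := by
    have hmap := congrArg (Submodule.map S.mkQ) h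
    rw [Submodule.map_sup, Submodule.map_smul'', Submodule.map_top, Submodule.range_mkQ] at hmap
    have hbot : Submodule.map S.mkQ S = ⊥ := by
      rw [eq_bot_iff]
      rintro x hx
      obtain ⟨y, hy, rfl⟩ := Submodule.mem_map.1 hx
      simpa using (Submodule.Quotient.mk_eq_zero S).2 hy
    rw [hbot, bot_sup_eq] at hmap
    rw [hmap]
  have htop : (⊤ : Submodule A (M ⧸ S)) = ⊥ :=
    nakayama (⊤ : Submodule A (M ⧸ S)) Module.Finite.fg_top hq
  have hall : ∀ x : M ⧸ S, x = 0 := fun x => (Submodule.mem_bot _).1 (htop ▸ Submodule.mem_top)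
  exact (Submodule.Quotient.subsingleton_iff (p := S)).1 (subsingleton_of_forall_eq 0 fun x => hall x)
end Gen
section Gen2
variable (k : Type*) [Field k] (A : Type*) [Ring A] [Algebra k A] [FiniteDimensional k A]
variable {M : Type*} [AddCommGroup M] [Module A M]

/-- Linear combination map. -/
def picomb {n : ℕ} (v : Fin n → M) : (Fin n → A) →ₗ[A] M where
  toFun a := ∑ i, a i • v i
  map_add' a b := by simp [add_smul, Finset.sum_add_distrib]
  map_smul' r a := by
    simp only [RingHom.id_apply, Finset.smul_sum]
    exact Finset.sum_congr rfl fun i _ => by simp [Pi.smul_apply, smul_smul]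

lemma kdim_le_finrank_mul [Module.Finite A M] :
    kdim k A M ≤ Module.finrank k A * kdim k A (M ⧸ modRad A M) := by
  classical
  haveI := kfin k A (M := M ⧸ modRad A M)
  set n := kdim k A (M ⧸ modRad A M) with hn
  have b : Module.Basis (Fin n) k (RestrictScalars k A (M ⧸ modRad A M)) :=
    Module.finBasis k (RestrictScalars k A (M ⧸ modRad A M))
  have hsurj := (modRad A M).mkQ_surjective
  choose v hv using fun i => hsurj (show M ⧸ modRad A M from b i)
  have hS : Submodule.span A (Set.range v) = ⊤ := by
    apply sup_modRad_eq_top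
    rw [eq_top_iff]
    intro m _
    set q : RestrictScalars k A (M ⧸ modRad A M) := Submodule.Quotient.mk m with hq
    have hrepr : q = ∑ i, b.repr q i • b i := (b.sum_repr q).symm
    have hw : (modRad A M).mkQ (∑ i, algebraMap k A (b.repr q i) • v i)
        = Submodule.Quotient.mk m := by
      rw [map_sum]
      have heach : ∀ i, (modRad A M).mkQ (algebraMap k A (b.repr q i) • v i)
          = (show M ⧸ modRad A M from b.repr q i • b i) := by
        intro i
        rw [map_smul, hv i]
        rfl
      rw [Finset.sum_congr rfl fun i _ => heach i]
      exact hrepr.symm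
    have hmem : m - ∑ i, algebraMap k A (b.repr q i) • v i ∈ modRad A M := by
      rw [Submodule.mkQ_apply] at hw
      rw [← Submodule.Quotient.mk_eq_zero, Submodule.Quotient.mk_sub, hw, sub_self]
    have hsum : (∑ i, algebraMap k A (b.repr q i) • v i) ∈ Submodule.span A (Set.range v) :=
      Submodule.sum_mem _ fun i _ =>
        Submodule.smul_mem _ _ (Submodule.subset_span ⟨i, rfl⟩)
    have : m = (∑ i, algebraMap k A (b.repr q i) • v i)
        + (m - ∑ i, algebraMap k A (b.repr q i) • v i) := by abel
    rw [this]
    exact Submodule.add_mem _ (Submodule.mem_sup_left hsum) (Submodule.mem_sup_right hmem)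
  have hΦ : Function.Surjective (picomb A v) := by
    intro x
    have hx : x ∈ Submodule.span A (Set.range v) := hS ▸ Submodule.mem_top
    obtain ⟨c, hc⟩ := (Submodule.mem_span_range_iff_exists_fun A).1 hx
    exact ⟨c, hc⟩
  calc kdim k A M ≤ kdim k A (Fin n → A) := kdim_le_of_surjective k A _ hΦ
    _ = Module.finrank k (Fin n → A) := (rsEquiv k A).finrank_eq
    _ = Module.finrank k A * n := by
        rw [Module.finrank_pi_fintype k]
        simp [Finset.sum_const, mul_comm]
end Gen2
section Homological
variable (k : Type*) [Field k] (A : Type*) [Ring A] [Algebra k A] [FiniteDimensional k A]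

lemma kdim_quot_mono {M : Type*} [AddCommGroup M] [Module A M] [Module.Finite A M]
    {p q : Submodule A M} (h : p ≤ q) :
    kdim k A (M ⧸ q) ≤ kdim k A (M ⧸ p) :=
  kdim_le_of_surjective k A (Submodule.mapQ p q LinearMap.id h)
    (fun x => by
      obtain ⟨y, rfl⟩ := q.mkQ_surjective x
      exact ⟨Submodule.Quotient.mk y, rfl⟩)

open CategoryTheory in
lemma sc_bound (S : ShortComplex (ModuleCat A)) [Module.Finite A S.X₂]
    [Module.Finite A S.X₃] :
    kdim k A (S.X₂ ⧸ LinearMap.range S.f.hom) ≤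
      kdim k A S.moduleCatLeftHomologyData.H + kdim k A S.X₃ := by
  have hker : LinearMap.range S.f.hom ≤ LinearMap.ker S.g.hom := by
    rintro x ⟨y, rfl⟩
    exact LinearMap.mem_ker.2 (S.moduleCat_zero_apply y)
  set φ : (S.X₂ ⧸ LinearMap.range S.f.hom) →ₗ[A] S.X₃ :=
    Submodule.liftQ _ S.g.hom hker with hφ
  -- rank-nullity
  have hrn := kdim_add_quot k A (M := S.X₂ ⧸ LinearMap.range S.f.hom) (LinearMap.ker φ)
  have h1 : kdim k A ((S.X₂ ⧸ LinearMap.range S.f.hom) ⧸ LinearMap.ker φ) ≤ kdim k A S.X₃ := by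
    calc kdim k A ((S.X₂ ⧸ LinearMap.range S.f.hom) ⧸ LinearMap.ker φ)
        = kdim k A (LinearMap.range φ) := kdim_eq_of_equiv k A φ.quotKerEquivRange
      _ ≤ kdim k A S.X₃ := kdim_le_of_injective k A (LinearMap.range φ).subtype
          (Submodule.injective_subtype _)
  have h2 : kdim k A (LinearMap.ker φ) = kdim k A S.moduleCatLeftHomologyData.H := by
    set ψ : LinearMap.ker S.g.hom →ₗ[A] LinearMap.ker φ :=
      LinearMap.codRestrict _ ((LinearMap.range S.f.hom).mkQ.comp (LinearMap.ker S.g.hom).subtype)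
        (fun x => by
          simp only [LinearMap.mem_ker, LinearMap.coe_comp, Function.comp_apply,
            Submodule.coe_subtype, Submodule.mkQ_apply, hφ, Submodule.liftQ_apply]
          exact x.2) with hψ
    have hsurj : Function.Surjective ψ := by
      rintro ⟨y, hy⟩
      obtain ⟨x, rfl⟩ := (LinearMap.range S.f.hom).mkQ_surjective y
      rw [LinearMap.mem_ker, hφ] at hy
      rw [Submodule.mkQ_apply, Submodule.liftQ_apply] at hy
      refine ⟨⟨x, LinearMap.mem_ker.2 hy⟩, ?_⟩
      apply Subtype.ext
      rfl
    have hkerψ : LinearMap.ker ψ = LinearMap.range S.moduleCatToCycles := by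
      ext x
      constructor
      · intro hx
        rw [LinearMap.mem_ker, hψ] at hx
        have : (LinearMap.range S.f.hom).mkQ x.1 = 0 := congrArg Subtype.val hx
        rw [Submodule.mkQ_apply, Submodule.Quotient.mk_eq_zero] at this
        obtain ⟨w, hw⟩ := this
        exact ⟨w, Subtype.ext hw⟩
      · rintro ⟨w, rfl⟩
        rw [LinearMap.mem_ker, hψ]
        apply Subtype.ext
        show (LinearMap.range S.f.hom).mkQ (S.f.hom w) = 0
        rw [Submodule.mkQ_apply, Submodule.Quotient.mk_eq_zero]
        exact ⟨w, rfl⟩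
    calc kdim k A (LinearMap.ker φ)
        = kdim k A (LinearMap.ker S.g.hom ⧸ LinearMap.ker ψ) :=
          (kdim_eq_of_equiv k A (ψ.quotKerEquivOfSurjective hsurj)).symm
      _ = kdim k A S.moduleCatLeftHomologyData.H := by rw [hkerψ]; rfl
  omega
end Homological
section Core
open CategoryTheory
variable (k : Type*) [Field k] (A : Type*) [Ring A] [Algebra k A] [FiniteDimensional k A]

lemma core_bound (X : CochainComplex (ModuleCat A) ℤ)
    (hfg : ∀ i : ℤ, Module.Finite A (X.X i))
    (hmin : ∀ i : ℤ, LinearMap.range (X.d i (i + 1)).hom ≤ modRad A (X.X (i + 1)))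
    (i : ℤ) :
    kdim k A (X.X i) ≤
      Module.finrank k A * (kdim k A (X.homology i) + kdim k A (X.X (i + 1))) := by
  haveI := hfg i
  haveI := hfg (i + 1)
  haveI := hfg (i - 1)
  set S : ShortComplex (ModuleCat A) := X.sc' (i - 1) i (i + 1) with hS
  haveI : Module.Finite A S.X₂ := hfg i
  haveI : Module.Finite A S.X₃ := hfg (i + 1)
  have hSX₂ : S.X₂ = X.X i := rfl
  have hSf : S.f = X.d (i - 1) i := rfl
  have hSg : S.g = X.d i (i + 1) := rfl
  -- homology identification
  have e : X.homology i ≅ S.moduleCatLeftHomologyData.H :=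
    (X.homologyIsoSc' (i - 1) i (i + 1) (CochainComplex.prev ℤ i) (CochainComplex.next ℤ i))
      ≪≫ S.moduleCatHomologyIso
  have hH : kdim k A (X.homology i) = kdim k A S.moduleCatLeftHomologyData.H :=
    kdim_eq_of_equiv k A e.toLinearEquiv
  -- minimality
  have hrange : LinearMap.range (X.d (i - 1) i).hom ≤ modRad A (X.X i) := by
    have h := hmin (i - 1)
    rw [show i - 1 + 1 = i by ring] at h
    exact h
  calc kdim k A (X.X i)
      ≤ Module.finrank k A * kdim k A (X.X i ⧸ modRad A (X.X i)) :=
        kdim_le_finrank_mul k A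
    _ ≤ Module.finrank k A * kdim k A (X.X i ⧸ LinearMap.range (X.d (i - 1) i).hom) :=
        Nat.mul_le_mul_left _ (kdim_quot_mono k A hrange)
    _ ≤ Module.finrank k A * (kdim k A S.moduleCatLeftHomologyData.H + kdim k A (X.X (i + 1))) :=
        Nat.mul_le_mul_left _ (sc_bound k A S)
    _ = Module.finrank k A * (kdim k A (X.homology i) + kdim k A (X.X (i + 1))) := by
        rw [hH]
end Core
end RSFix
lemma sum_pow_succ (d : ℕ) : ∀ n : ℕ,
    ∑ j ∈ Finset.Icc 1 (n + 1), d ^ j = d * (1 + ∑ j ∈ Finset.Icc 1 n, d ^ j) := by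
  intro n
  induction n with
  | zero => simp
  | succ n ih =>
    have h1 : ∑ j ∈ Finset.Icc 1 (n + 1 + 1), d ^ j
        = (∑ j ∈ Finset.Icc 1 (n + 1), d ^ j) + d ^ (n + 1 + 1) :=
      Finset.sum_Icc_succ_top (by omega) _
    have h2 : ∑ j ∈ Finset.Icc 1 (n + 1), d ^ j
        = (∑ j ∈ Finset.Icc 1 n, d ^ j) + d ^ (n + 1) :=
      Finset.sum_Icc_succ_top (by omega) _
    calc ∑ j ∈ Finset.Icc 1 (n + 1 + 1), d ^ j
        = (∑ j ∈ Finset.Icc 1 (n + 1), d ^ j) + d ^ (n + 1 + 1) := h1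
      _ = d * (1 + ∑ j ∈ Finset.Icc 1 n, d ^ j) + d ^ (n + 1 + 1) := by rw [ih]
      _ = d * (1 + ((∑ j ∈ Finset.Icc 1 n, d ^ j) + d ^ (n + 1))) := by ring
      _ = d * (1 + ∑ j ∈ Finset.Icc 1 (n + 1), d ^ j) := by rw [← h2]

/-- Let `A` be a finite-dimensional `k`-algebra of dimension `d` and `X` a minimal
complex of finitely generated projective `A`-modules concentrated in degrees
`0,…,m` with `dim_k Hⁱ(X) ≤ c` for all `i`.  Then for each `i ∈ [0,m]`,
`dim_k Xⁱ ≤ c·(d + d² + ⋯ + d^{m−i+1})`. -/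
theorem stmt_2 (k : Type*) [Field k] (A : Type*) [Ring A] [Algebra k A]
    [FiniteDimensional k A] (m : ℕ)
    (X : CochainComplex (ModuleCat A) ℤ)
    (hconc : ∀ i : ℤ, (i < 0 ∨ (m : ℤ) < i) → Subsingleton (X.X i))
    (hfg : ∀ i : ℤ, Module.Finite A (X.X i))
    (hproj : ∀ i : ℤ, Module.Projective A (X.X i))
    (hmin : ∀ i : ℤ, LinearMap.range (X.d i (i + 1)).hom ≤ modRad A (X.X (i + 1)))
    (c : ℕ) (hc : ∀ i : ℤ, kdim k A (X.homology i) ≤ c) :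
    ∀ i : ℤ, 0 ≤ i → i ≤ (m : ℤ) →
      kdim k A (X.X i) ≤
        c * ∑ j ∈ Finset.Icc 1 ((m : ℤ) - i + 1).toNat, (Module.finrank k A) ^ j := by
  suffices H : ∀ (n : ℕ) (i : ℤ), ((m : ℤ) - i + 1).toNat = n →
      kdim k A (X.X i) ≤ c * ∑ j ∈ Finset.Icc 1 n, (Module.finrank k A) ^ j by
    intro i _ _
    exact H _ i rfl
  intro n
  induction n with
  | zero =>
    intro i hi
    have hlt : (m : ℤ) < i := by omega
    have := kdim_subsingleton k A (hconc i (Or.inr hlt))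
    simp [this]
  | succ n ih =>
    intro i hi
    have hnext : ((m : ℤ) - (i + 1) + 1).toNat = n := by omega
    have h1 := core_bound k A X hfg hmin i
    have h2 := ih (i + 1) hnext
    have h3 := hc i
    calc kdim k A (X.X i)
        ≤ Module.finrank k A * (kdim k A (X.homology i) + kdim k A (X.X (i + 1))) := h1
      _ ≤ Module.finrank k A *
          (c + c * ∑ j ∈ Finset.Icc 1 n, (Module.finrank k A) ^ j) :=
          Nat.mul_le_mul_left _ (Nat.add_le_add h3 h2)
      _ = c * ∑ j ∈ Finset.Icc 1 (n + 1), (Module.finrank k A) ^ j := by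
          rw [sum_pow_succ]; ring
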